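/- Let H be a Hermitian operator on a finite-dimensional Hilbert space that decomposes as H = R + Σ_{e} w_e H_e, where R ⪰ 0, each w_e ≥ 0, and each H_e is Hermitian. Let C be a set of constraint operators and let μ*_e = min{Tr[H_e ρ] : ρ a density matrix with Tr[C ρ] = 0 for all C} be the constrained local optimum for H_e, and μ* the constrained optimum of H. If ρ is a density matrix satisfying all constraints such that Tr[R ρ] = 0 and Tr[H_e ρ] ≤ α μ*_e for all e (where α ≥ 1), then Tr[H ρ] ≤ α μ*. -/

import Mathlib

open Matrix ComplexOrder

/-- A density matrix satisfying all constraints `Tr[C l ρ] = 0`. -/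
def FeasibleState {N L : Type*} [Fintype N] [DecidableEq N]
    (C : L → Matrix N N ℂ) (ρ : Matrix N N ℂ) : Prop :=
  ρ.PosSemidef ∧ ρ.trace = 1 ∧ ∀ l, (C l * ρ).trace = 0

lemma aux_trace_re_nonneg {N : Type*} [Fintype N] [DecidableEq N]
    {M : Matrix N N ℂ} (hM : M.PosSemidef) : 0 ≤ M.trace.re := by
  rw [Matrix.trace, Complex.re_sum]
  refine Finset.sum_nonneg fun i _ => ?_
  have := hM.re_dotProduct_nonneg (Pi.single i 1)
  simpa [dotProduct, Matrix.mulVec, Pi.single_apply, Finset.sum_ite_eq,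
    Finset.sum_ite_eq'] using this

open scoped MatrixOrder in
lemma aux_trace_mul_re_nonneg {N : Type*} [Fintype N] [DecidableEq N]
    {A B : Matrix N N ℂ} (hA : A.PosSemidef) (hB : B.PosSemidef) :
    0 ≤ ((A * B).trace).re := by
  have hS : (CFC.sqrt B).PosSemidef := (CFC.sqrt_nonneg B).posSemidef
  have key : (A * B).trace = (CFC.sqrt B * A * CFC.sqrt B).trace := by
    conv_lhs => rw [← CFC.sqrt_mul_sqrt_self B hB.nonneg]
    rw [← mul_assoc, Matrix.trace_mul_comm, mul_assoc, ← mul_assoc]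
  rw [key]
  have : (CFC.sqrt B * A * CFC.sqrt B).PosSemidef := by
    have := hA.mul_mul_conjTranspose_same (CFC.sqrt B)
    rwa [hS.isHermitian.eq] at this
  exact aux_trace_re_nonneg this

lemma aux_expand {N E : Type*} [Fintype N] [DecidableEq N] [Fintype E]
    (R : Matrix N N ℂ) (He : E → Matrix N N ℂ) (w : E → ℝ) (ρ : Matrix N N ℂ) :
    (((R + ∑ e, (w e : ℂ) • He e) * ρ).trace).re
      = ((R * ρ).trace).re + ∑ e, w e * ((He e * ρ).trace).re := by
  rw [add_mul, Finset.sum_mul, Matrix.trace_add, Matrix.trace_sum, Complex.add_re,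
    Complex.re_sum]
  congr 1
  refine Finset.sum_congr rfl fun e _ => ?_
  rw [smul_mul_assoc, Matrix.trace_smul]
  simp [smul_eq_mul, Complex.re_ofReal_mul]

/-- Quantum local ratio theorem. -/
theorem local_ratio {N E L : Type*} [Fintype N] [DecidableEq N] [Fintype E]
    (H R : Matrix N N ℂ) (He : E → Matrix N N ℂ) (w : E → ℝ)
    (C : L → Matrix N N ℂ)
    (hH : H.IsHermitian) (hHe : ∀ e, (He e).IsHermitian)
    (hR : R.PosSemidef) (hw : ∀ e, 0 ≤ w e)
    (hdecomp : H = R + ∑ e, (w e : ℂ) • He e)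
    (μe : E → ℝ) (μstar : ℝ)
    (hμe : ∀ e, IsLeast {x : ℝ | ∃ ρ, FeasibleState C ρ ∧ ((He e * ρ).trace).re = x} (μe e))
    (hμstar : IsLeast {x : ℝ | ∃ ρ, FeasibleState C ρ ∧ ((H * ρ).trace).re = x} μstar)
    (α : ℝ) (hα : 1 ≤ α)
    (ρ : Matrix N N ℂ) (hρ : FeasibleState C ρ)
    (hRρ : (R * ρ).trace = 0)
    (hloc : ∀ e, ((He e * ρ).trace).re ≤ α * μe e) :
    ((H * ρ).trace).re ≤ α * μstar := by
  have hα0 : (0:ℝ) ≤ α := le_trans zero_le_one hα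
  -- optimal state for μstar
  obtain ⟨ρs, hρs, hρsval⟩ := hμstar.1
  have hsum_le : (∑ e, w e * μe e) ≤ μstar := by
    rw [← hρsval, hdecomp, aux_expand]
    have h1 : 0 ≤ ((R * ρs).trace).re := aux_trace_mul_re_nonneg hR hρs.1
    have h2 : (∑ e, w e * μe e) ≤ ∑ e, w e * ((He e * ρs).trace).re := by
      refine Finset.sum_le_sum fun e _ => mul_le_mul_of_nonneg_left ?_ (hw e)
      exact (hμe e).2 ⟨ρs, hρs, rfl⟩
    linarith
  rw [hdecomp, aux_expand, hRρ]
  simp only [Complex.zero_re, zero_add]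
  calc (∑ e, w e * ((He e * ρ).trace).re) ≤ ∑ e, w e * (α * μe e) :=
        Finset.sum_le_sum fun e _ => mul_le_mul_of_nonneg_left (hloc e) (hw e)
    _ = α * ∑ e, w e * μe e := by rw [Finset.mul_sum]; exact Finset.sum_congr rfl fun e _ => by ring
    _ ≤ α * μstar := mul_le_mul_of_nonneg_left hsum_le hα0
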